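/- For every integer d ≥ 4, the singleton {x_1} is a generating set of the algebra V_d whose characteristic sequence is (1, 2, …, d−2, d−1, 2d−3), and l(V_d) = 2d − 3. -/

import Mathlib

namespace P

/-- The list of leaves (letters) of a nonassociative word, in order. -/
def leafList {α : Type*} : FreeMagma α → List α
  | .of a => [a]
  | .mul x y => leafList x ++ leafList y

/-- The length of a nonassociative word: the number of factors. -/
def wlen {α : Type*} (w : FreeMagma α) : ℕ := (leafList w).length

/-- Evaluation of a formal word with letters in a magma `A`. -/
def evalA {A : Type*} [Mul A] (w : FreeMagma A) : A :=
  FreeMagma.lift (id : A → A) w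

/-- Evaluation of a formal word in variables `Fin n` under an assignment `v`. -/
def evalVar {A : Type*} [Mul A] {n : ℕ} (v : Fin n → A) (w : FreeMagma (Fin n)) : A :=
  FreeMagma.lift v w

/-- `w` is a word in the set `S`: all its letters belong to `S`. -/
def HasLeavesIn {A : Type*} (S : Set A) (w : FreeMagma A) : Prop :=
  ∀ a ∈ leafList w, a ∈ S

/-- `L_i(S)`: the span of all values of words in `S` of length at most `i`.
For `i = 0` this is `0`, since every word has length at least 1. -/
def Lspan (F : Type*) {A : Type*} [Field F] [NonUnitalNonAssocRing A] [Module F A]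
    (S : Set A) (i : ℕ) : Submodule F A :=
  Submodule.span F { a | ∃ w : FreeMagma A, HasLeavesIn S w ∧ wlen w ≤ i ∧ evalA w = a }

/-- `S` is a generating set of the algebra `A`. -/
def Generates (F : Type*) {A : Type*} [Field F] [NonUnitalNonAssocRing A] [Module F A]
    (S : Set A) : Prop :=
  Submodule.span F { a | ∃ w : FreeMagma A, HasLeavesIn S w ∧ evalA w = a } = ⊤

/-- The length `l(S)` of a generating set: the least `k` with `L_k(S) = A`. -/
noncomputable def lenS (F : Type*) {A : Type*} [Field F] [NonUnitalNonAssocRing A] [Module F A]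
    (S : Set A) : ℕ :=
  sInf { k | Lspan F S k = ⊤ }

/-- The characteristic sequence of a generating set `S`, as a predicate on a
nondecreasing sequence `m : Fin d → ℕ`. -/
def IsCharSeq (F : Type*) {A : Type*} [Field F] [NonUnitalNonAssocRing A] [Module F A]
    (S : Set A) {d : ℕ} (m : Fin d → ℕ) : Prop :=
  Monotone m ∧ (∀ j, 1 ≤ m j) ∧
    ∀ t : ℕ, 1 ≤ t →
      (Finset.univ.filter fun j => m j = t).card =
        Module.finrank F (Lspan F S t) - Module.finrank F (Lspan F S (t - 1))

/-- `w` is a multilinear word using each variable of `T` exactly once. -/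
def IsMultilinearOn {n : ℕ} (T : Finset (Fin n)) (w : FreeMagma (Fin n)) : Prop :=
  (leafList w : Multiset (Fin n)) = T.val

/-- Membership in `D_0(z_0,…,z_k)`: multilinear words in `z_0,…,z_k` except those of
length `k+1` in which `z_0` is a factor of the last multiplication. -/
def InD0 {k : ℕ} (w : FreeMagma (Fin (k + 1))) : Prop :=
  (leafList w : Multiset (Fin (k + 1))).Nodup ∧
    ¬∃ u : FreeMagma (Fin (k + 1)),
        IsMultilinearOn (Finset.univ.erase 0) u ∧
          (w = FreeMagma.of 0 * u ∨ w = u * FreeMagma.of 0)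

/-- Membership in `D_l(z_0,…,z_k)`: multilinear words in `z_0,…,z_k` except those of
length `k+1` in which `z_0` occurs in the first factor of the last multiplication. -/
def InDl {k : ℕ} (w : FreeMagma (Fin (k + 1))) : Prop :=
  (leafList w : Multiset (Fin (k + 1))).Nodup ∧
    ¬((leafList w : Multiset (Fin (k + 1))) = (Finset.univ : Finset (Fin (k + 1))).val ∧
      ∃ w1 w2 : FreeMagma (Fin (k + 1)), w = w1 * w2 ∧ (0 : Fin (k + 1)) ∈ leafList w1)

/-- Membership in `D_r(z_0,…,z_k)`: multilinear words in `z_0,…,z_k` except those of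
length `k+1` in which `z_0` occurs in the second factor of the last multiplication. -/
def InDr {k : ℕ} (w : FreeMagma (Fin (k + 1))) : Prop :=
  (leafList w : Multiset (Fin (k + 1))).Nodup ∧
    ¬((leafList w : Multiset (Fin (k + 1))) = (Finset.univ : Finset (Fin (k + 1))).val ∧
      ∃ w1 w2 : FreeMagma (Fin (k + 1)), w = w1 * w2 ∧ (0 : Fin (k + 1)) ∈ leafList w2)

/-- The algebra `A` is `k`-mixing. -/
def IsKMixing (F A : Type*) [Field F] [NonUnitalNonAssocRing A] [Module F A] (k : ℕ) : Prop :=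
  ∀ (x : A) (y : Fin k → A) (w : FreeMagma (Fin (k + 1))),
    (∃ u, IsMultilinearOn (Finset.univ.erase 0) u ∧
        (w = FreeMagma.of 0 * u ∨ w = u * FreeMagma.of 0)) →
      evalVar (Fin.cons x y) w ∈
        Submodule.span F
          { a | ∃ z : FreeMagma (Fin (k + 1)), InD0 z ∧ evalVar (Fin.cons x y) z = a }

/-- The algebra `A` is `k`-sliding. -/
def IsKSliding (F A : Type*) [Field F] [NonUnitalNonAssocRing A] [Module F A] (k : ℕ) : Prop :=
  (∀ (x : A) (y : Fin k → A) (u : FreeMagma (Fin (k + 1))),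
      IsMultilinearOn (Finset.univ.erase 0) u →
        evalVar (Fin.cons x y) (u * FreeMagma.of 0) ∈
          Submodule.span F
            { a | ∃ z : FreeMagma (Fin (k + 1)), InDl z ∧ evalVar (Fin.cons x y) z = a }) ∨
  (∀ (x : A) (y : Fin k → A) (u : FreeMagma (Fin (k + 1))),
      IsMultilinearOn (Finset.univ.erase 0) u →
        evalVar (Fin.cons x y) (FreeMagma.of 0 * u) ∈
          Submodule.span F
            { a | ∃ z : FreeMagma (Fin (k + 1)), InDr z ∧ evalVar (Fin.cons x y) z = a })

/-- `u` is a subword of `w`. -/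
inductive IsSubword {A : Type*} : FreeMagma A → FreeMagma A → Prop
  | refl (w : FreeMagma A) : IsSubword w w
  | left {s u : FreeMagma A} (v : FreeMagma A) : IsSubword s u → IsSubword s (u * v)
  | right (u : FreeMagma A) {s v : FreeMagma A} : IsSubword s v → IsSubword s (u * v)

/-- `IsSprout w L`: `L` is a sprout sequence of the word `w` (with the convention that
words of length 1 have the empty sprout sequence). -/
inductive IsSprout {A : Type*} : FreeMagma A → List (FreeMagma A) → Prop
  | single (a : A) : IsSprout (FreeMagma.of a) []
  | cons_l {u v : FreeMagma A} {L : List (FreeMagma A)} :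
      wlen u ≤ wlen v → IsSprout v L → IsSprout (u * v) (u :: L)
  | cons_r {u v : FreeMagma A} {L : List (FreeMagma A)} :
      wlen v ≤ wlen u → IsSprout u L → IsSprout (u * v) (v :: L)

/-- A word is `k`-bounded if it has length 1 or admits an `l`-sprout sequence all of whose
terms are strictly less than `k`. -/
def KBounded {A : Type*} (k : ℕ) (w : FreeMagma A) : Prop :=
  ∃ L : List (FreeMagma A), IsSprout w L ∧ ∀ u ∈ L, wlen u < k

/-- A word `w` in `S` is irreducible if it does not lie in `L_m(S)` for any `m < l(w)`. -/
def Irred (F : Type*) {A : Type*} [Field F] [NonUnitalNonAssocRing A] [Module F A]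
    (S : Set A) (w : FreeMagma A) : Prop :=
  ∀ m : ℕ, m < wlen w → evalA w ∉ Lspan F S m

/-- The step function of a word: the least `t` such that `w` has a subword of
length `l(w) - 2t - 1`. -/
noncomputable def stepFn {A : Type*} (w : FreeMagma A) : ℕ :=
  sInf { t : ℕ | ∃ u : FreeMagma A, IsSubword u w ∧ wlen u + 2 * t + 1 = wlen w }

/-- `w` is a `p`-step word for the generating set `S`. -/
def IsPStepWord (F : Type*) {A : Type*} [Field F] [NonUnitalNonAssocRing A] [Module F A]
    (S : Set A) (w : FreeMagma A) (p : ℕ) : Prop :=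
  HasLeavesIn S w ∧ Irred F S w ∧ KBounded 3 w ∧ stepFn w = p ∧
    ∀ v : FreeMagma A, HasLeavesIn S v → Irred F S v → KBounded 3 v → wlen v = wlen w →
      p ≤ stepFn v

/-- `A` is `k`-round: `x · v = 0` for every product `v` of `k` elements. -/
def IsKRound (A : Type*) [NonUnitalNonAssocRing A] (k : ℕ) : Prop :=
  ∀ (x : A) (w : FreeMagma A), wlen w = k → x * evalA w = 0

/-- `A` is `k`-based. -/
def IsKBased (A : Type*) [NonUnitalNonAssocRing A] (k : ℕ) : Prop :=
  ∀ (x : A) (u v : FreeMagma A), wlen u + wlen v = k →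
    x * (evalA u * evalA v) = evalA u * (x * evalA v) ∧
      (evalA u * evalA v) * x = (evalA u * x) * evalA v

/-- The set `P(x,y,z)`. -/
def Pset {A : Type*} [Mul A] (x y z : A) : Set A :=
  {(x*z)*y, (z*x)*y, (y*z)*x, (z*y)*x, x*(z*y), x*(y*z), y*(x*z), y*(z*x),
    x*y, y*x, x*z, z*x, y*z, z*y, x, y, z}

/-- The set `Q_l(x,y,z)`. -/
def Qlset {A : Type*} [Mul A] (x y z : A) : Set A :=
  {x*(z*y), x*(y*z), y*(x*z), y*(z*x), x*y, y*x, x*z, z*x, y*z, z*y, x, y, z}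

/-- The set `Q_r(x,y,z)`. -/
def Qrset {A : Type*} [Mul A] (x y z : A) : Set A :=
  {(x*z)*y, (z*x)*y, (y*z)*x, (z*y)*x, x*y, y*x, x*z, z*x, y*z, z*y, x, y, z}

/-- `A` is a mixing algebra. -/
def IsMixingAlg (F A : Type*) [Field F] [NonUnitalNonAssocRing A] [Module F A] : Prop :=
  ∀ x y z : A, (x*y)*z ∈ Submodule.span F (Pset x y z) ∧
    z*(x*y) ∈ Submodule.span F (Pset x y z)

/-- `A` is a sliding algebra. -/
def IsSlidingAlg (F A : Type*) [Field F] [NonUnitalNonAssocRing A] [Module F A] : Prop :=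
  (∀ x y z : A, z*(x*y) ∈ Submodule.span F (Qrset x y z)) ∨
  (∀ x y z : A, (x*y)*z ∈ Submodule.span F (Qlset x y z))


set_option linter.unusedSectionVars false
set_option linter.unusedVariables false
set_option maxHeartbeats 1000000

section MyAux
variable {F A : Type*} [Field F] [NonUnitalNonAssocRing A] [Module F A]
  [SMulCommClass F A A] [IsScalarTower F A A]

theorem leafList_mul {α : Type*} (u v : FreeMagma α) :
    leafList (u * v) = leafList u ++ leafList v := rfl

theorem evalA_mul' (u v : FreeMagma A) : evalA (u * v) = evalA u * evalA v := rfl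

theorem wlen_mul' {α : Type*} (u v : FreeMagma α) : wlen (u * v) = wlen u + wlen v := by
  simp [wlen, leafList_mul]

theorem one_le_wlen {α : Type*} (w : FreeMagma α) : 1 ≤ wlen w := by
  induction w with
  | ih1 a => simp [wlen, leafList]
  | ih2 u v ihu ihv => rw [wlen_mul']; omega

theorem mul_span_span {s t : Set A} {P : Submodule F A}
    (h : ∀ x ∈ s, ∀ y ∈ t, x * y ∈ P) :
    ∀ u ∈ Submodule.span F s, ∀ v ∈ Submodule.span F t, u * v ∈ P := by
  intro u hu v hv
  induction hu using Submodule.span_induction with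
  | mem x hx =>
    induction hv using Submodule.span_induction with
    | mem y hy => exact h x hx y hy
    | zero => rw [mul_zero]; exact zero_mem _
    | add y z hy' hz' hy hz => rw [mul_add]; exact add_mem hy hz
    | smul c y hy' hy => rw [mul_smul_comm]; exact Submodule.smul_mem _ _ hy
  | zero => rw [zero_mul]; exact zero_mem _
  | add x y hx' hy' hx hy => rw [add_mul]; exact add_mem hx hy
  | smul c x hx' hx => rw [smul_mul_assoc]; exact Submodule.smul_mem _ _ hx

theorem mem_Lspan {S : Set A} {t : ℕ} {w : FreeMagma A} (hw : HasLeavesIn S w)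
    (hl : wlen w ≤ t) : evalA w ∈ Lspan F S t :=
  Submodule.subset_span ⟨w, hw, hl, rfl⟩

theorem Lspan_le {S : Set A} {t : ℕ} {P : Submodule F A}
    (h : ∀ w : FreeMagma A, HasLeavesIn S w → wlen w ≤ t → evalA w ∈ P) :
    Lspan F S t ≤ P :=
  Submodule.span_le.2 (fun a ⟨w, hw, hl, he⟩ => he ▸ h w hw hl)

theorem mul_mem_Lspan {S : Set A} {p q : ℕ} {u v : A}
    (hu : u ∈ Lspan F S p) (hv : v ∈ Lspan F S q) : u * v ∈ Lspan F S (p + q) := by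
  refine mul_span_span (fun x hx y hy => ?_) u hu v hv
  obtain ⟨w1, hw1, hl1, rfl⟩ := hx
  obtain ⟨w2, hw2, hl2, rfl⟩ := hy
  rw [← evalA_mul']
  refine mem_Lspan (fun a ha => ?_) (by rw [wlen_mul']; omega)
  rcases List.mem_append.1 ha with h' | h'
  exacts [hw1 a h', hw2 a h']

theorem Lspan_mono' {S : Set A} {i j : ℕ} (hij : i ≤ j) : Lspan F S i ≤ Lspan F S j :=
  Submodule.span_mono fun a ⟨w, h1, h2, h3⟩ => ⟨w, h1, h2.trans hij, h3⟩

def lpow {α : Type*} (x : α) : ℕ → FreeMagma α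
  | 0 => .of x
  | n + 1 => lpow x n * .of x

theorem lpow_leaves {α : Type*} (x : α) (n : ℕ) : HasLeavesIn {x} (lpow x n) := by
  induction n with
  | zero => intro a ha; simpa [lpow, leafList] using ha
  | succ n ih =>
    intro a ha
    rcases List.mem_append.1 (by simpa [lpow, leafList_mul] using ha) with h' | h'
    · exact ih a h'
    · simp [leafList] at h'; simp [h']

theorem lpow_wlen {α : Type*} (x : α) (n : ℕ) : wlen (lpow x n) = n + 1 := by
  induction n with
  | zero => simp [lpow, wlen, leafList]
  | succ n ih => rw [lpow, wlen_mul', ih]; simp [wlen, leafList]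

theorem finrank_span_image {d : ℕ} (b : Module.Basis (Fin d) F A) (s : Finset (Fin d)) :
    Module.finrank F (Submodule.span F (⇑b '' ↑s)) = s.card := by
  classical
  have hli : LinearIndependent F (fun x : {x // x ∈ s} => b ↑x) :=
    b.linearIndependent.comp _ Subtype.val_injective
  have himg : ⇑b '' ↑s = Set.range (fun x : {x // x ∈ s} => b ↑x) := by
    ext a; simp [Set.mem_image, Set.mem_range]
  rw [himg, finrank_span_eq_card hli, Fintype.card_coe]

/-- weight function -/
def wtf (d : ℕ) (i : Fin d) : ℕ := if (i : ℕ) = d - 1 then 2 * d - 3 else (i : ℕ) + 1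

theorem wtf_lb {d : ℕ} (hd : 4 ≤ d) (i : Fin d) : 1 ≤ wtf d i := by
  unfold wtf; split <;> omega

theorem wtf_ub {d : ℕ} (hd : 4 ≤ d) (i : Fin d) : wtf d i ≤ 2 * d - 3 := by
  have := i.isLt; unfold wtf; split <;> omega

theorem wtf_of_ne {d : ℕ} (i : Fin d) (h : (i : ℕ) ≠ d - 1) : wtf d i = (i : ℕ) + 1 := by
  unfold wtf; rw [if_neg h]

theorem wtf_last {d : ℕ} (h : d - 1 < d) : wtf d ⟨d - 1, h⟩ = 2 * d - 3 := by
  unfold wtf; rw [if_pos rfl]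

theorem wtf_inj {d : ℕ} (hd : 4 ≤ d) (i : Fin d) (t : ℕ) (ht : t ≤ d - 1)
    (h : wtf d i = t) : (i : ℕ) = t - 1 := by
  have := i.isLt
  by_cases hi : (i : ℕ) = d - 1
  · unfold wtf at h; rw [if_pos hi] at h; omega
  · rw [wtf_of_ne i hi] at h; omega

theorem aux_ij {d : ℕ} (i j : Fin d) (hij : (i : ℕ) + (j : ℕ) + 3 ≤ d) :
    (i : ℕ) + (j : ℕ) + 1 < d := by omega

theorem aux_0 {d : ℕ} (hd : 4 ≤ d) : 0 < d := by omega

theorem aux_1 {d : ℕ} (hd : 4 ≤ d) : d - 1 < d := by omega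

theorem aux_2 {d : ℕ} (hd : 4 ≤ d) : d - 2 < d := by omega

theorem aux_3 {d : ℕ} (hd : 4 ≤ d) : d - 3 < d := by omega

variable {d : ℕ} (b : Module.Basis (Fin d) F A)

/-- The weight filtration. -/
def Wd (k : ℕ) : Submodule F A := Submodule.span F (⇑b '' {i | k ≤ wtf d i})

theorem Wd_anti {k k' : ℕ} (h : k ≤ k') : Wd b k' ≤ Wd b k :=
  Submodule.span_mono (Set.image_mono fun i hi => le_trans h hi)

theorem Wd_memb (i : Fin d) (k : ℕ) (hk : k ≤ wtf d i) : b i ∈ Wd b k :=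
  Submodule.subset_span ⟨i, hk, rfl⟩

theorem Wd_le {k : ℕ} {P : Submodule F A} (h : ∀ i : Fin d, k ≤ wtf d i → b i ∈ P) :
    Wd b k ≤ P :=
  Submodule.span_le.2 (fun a ⟨i, hi, he⟩ => he ▸ h i hi)

theorem Wd_bot (hd : 4 ≤ d) : Wd b (2 * d - 2) = ⊥ := by
  have h : {i : Fin d | 2 * d - 2 ≤ wtf d i} = ∅ := by
    ext i; simp only [Set.mem_setOf_eq, Set.mem_empty_iff_false, iff_false, not_le]
    have := wtf_ub hd i; omega
  unfold Wd; rw [h]; simp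

theorem Wd_top (hd : 4 ≤ d) : Wd b 1 = ⊤ := by
  have h : {i : Fin d | 1 ≤ wtf d i} = Set.univ := by
    ext i; simp [wtf_lb hd i]
  unfold Wd; rw [h, Set.image_univ, b.span_eq]

section WithMul

variable (hd : 4 ≤ d)
    (h1 : ∀ i j : Fin d, (hij : (i : ℕ) + (j : ℕ) + 3 ≤ d) →
      b i * b j = b ⟨(i : ℕ) + (j : ℕ) + 1, aux_ij i j hij⟩)
    (h2 : b ⟨d - 2, aux_2 hd⟩ * b ⟨d - 3, aux_3 hd⟩ = b ⟨d - 1, aux_1 hd⟩)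
    (h0 : ∀ i j : Fin d, ¬((i : ℕ) + (j : ℕ) + 3 ≤ d) →
      ¬((i : ℕ) = d - 2 ∧ (j : ℕ) = d - 3) → b i * b j = 0)

include hd h1 h2 h0 in
theorem bb_weight : ∀ i j : Fin d, b i * b j = 0 ∨
    ∃ k : Fin d, b i * b j = b k ∧ wtf d i + wtf d j ≤ wtf d k := by
  intro i j
  have hi := i.isLt; have hj := j.isLt
  by_cases hij : (i : ℕ) + (j : ℕ) + 3 ≤ d
  · right
    refine ⟨⟨(i : ℕ) + (j : ℕ) + 1, by omega⟩, h1 i j hij, ?_⟩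
    rw [wtf_of_ne i (by omega), wtf_of_ne j (by omega),
      wtf_of_ne ⟨(i : ℕ) + (j : ℕ) + 1, by omega⟩ (by simp; omega)]
    simp only [Fin.val_mk]; omega
  · by_cases hsp : (i : ℕ) = d - 2 ∧ (j : ℕ) = d - 3
    · right
      refine ⟨⟨d - 1, by omega⟩, ?_, ?_⟩
      · obtain ⟨hsp1, hsp2⟩ := hsp
        rcases i with ⟨iv, hiv⟩
        rcases j with ⟨jv, hjv⟩
        simp only [Fin.val_mk] at hsp1 hsp2
        subst hsp1; subst hsp2
        exact h2
      · rw [wtf_last (by omega), wtf_of_ne i (by omega), wtf_of_ne j (by omega)]; omega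
    · left; exact h0 i j hij hsp

include hd h1 h2 h0 in
theorem Wd_mul {p q : ℕ} {u v : A} (hu : u ∈ Wd b p) (hv : v ∈ Wd b q) :
    u * v ∈ Wd b (p + q) := by
  refine mul_span_span (fun x hx y hy => ?_) u hu v hv
  obtain ⟨i, hi, rfl⟩ := hx
  obtain ⟨j, hj, rfl⟩ := hy
  rcases bb_weight b hd h1 h2 h0 i j with h | ⟨k, hk, hmk⟩
  · rw [h]; exact zero_mem _
  · rw [hk]; exact Wd_memb b k _ (by simp only [Set.mem_setOf_eq] at hi hj; omega)


theorem evalA_of (x : A) : evalA (FreeMagma.of x) = x := rfl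

include hd h1 h2 h0 in
theorem classify : ∀ w : FreeMagma A, HasLeavesIn {b ⟨0, aux_0 hd⟩} w →
    (∃ k : ℕ, ∃ hk : k < d - 1, wlen w = k + 1 ∧ evalA w = b ⟨k, by omega⟩) ∨
    (d ≤ wlen w ∧ evalA w = 0) ∨
    (wlen w = 2 * d - 3 ∧ evalA w = b ⟨d - 1, aux_1 hd⟩) := by
  intro w hw
  induction w with
  | ih1 a =>
    left
    have ha : a = b ⟨0, by omega⟩ := hw a (by simp [leafList])
    exact ⟨0, by omega, by simp [wlen, leafList], ha⟩
  | ih2 u v ihu ihv =>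
    have hu := ihu (fun a ha => hw a (by rw [leafList_mul]; exact List.mem_append_left _ ha))
    have hv := ihv (fun a ha => hw a (by rw [leafList_mul]; exact List.mem_append_right _ ha))
    have h1u := one_le_wlen u; have h1v := one_le_wlen v
    rw [wlen_mul', evalA_mul']
    rcases hu with ⟨p, hp, hup, hue⟩ | ⟨hud, hue⟩ | ⟨hu3, hue⟩
    · rcases hv with ⟨q, hq, hvq, hve⟩ | ⟨hvd, hve⟩ | ⟨hv3, hve⟩
      · rw [hue, hve]
        by_cases hpq : p + q + 3 ≤ d
        · left
          refine ⟨p + q + 1, by omega, by omega, ?_⟩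
          have heq := h1 ⟨p, by omega⟩ ⟨q, by omega⟩ (by simp only [Fin.val_mk]; omega)
          rw [heq]
        · by_cases hsp : p = d - 2 ∧ q = d - 3
          · right; right
            obtain ⟨rfl, rfl⟩ := hsp
            exact ⟨by omega, h2⟩
          · right; left
            refine ⟨by omega, h0 ⟨p, by omega⟩ ⟨q, by omega⟩ ?_ ?_⟩
            · simp only [Fin.val_mk]; omega
            · simp only [Fin.val_mk]; exact hsp
      · right; left; rw [hve, mul_zero]; exact ⟨by omega, rfl⟩
      · right; left
        rw [hue, hve]
        refine ⟨by omega, h0 _ _ ?_ ?_⟩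
        · simp only [Fin.val_mk]; omega
        · simp only [Fin.val_mk]; omega
    · right; left; rw [hue, zero_mul]; exact ⟨by omega, rfl⟩
    · rcases hv with ⟨q, hq, hvq, hve⟩ | ⟨hvd, hve⟩ | ⟨hv3, hve⟩
      · right; left
        rw [hue, hve]
        refine ⟨by omega, h0 _ _ ?_ ?_⟩
        · simp only [Fin.val_mk]; omega
        · simp only [Fin.val_mk]; omega
      · right; left; rw [hve, mul_zero]; exact ⟨by omega, rfl⟩
      · right; left
        rw [hue, hve]
        refine ⟨by omega, h0 _ _ ?_ ?_⟩
        · simp only [Fin.val_mk]; omega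
        · simp only [Fin.val_mk]; omega

include hd h1 in
theorem lpow_eval : ∀ n : ℕ, n ≤ d - 2 → ∀ h : n < d,
    evalA (lpow (b ⟨0, aux_0 hd⟩) n) = b ⟨n, h⟩ := by
  intro n
  induction n with
  | zero => intro _ _; rfl
  | succ n ih =>
    intro hn h
    show evalA (lpow (b ⟨0, by omega⟩) n * FreeMagma.of (b ⟨0, by omega⟩)) = b ⟨n + 1, h⟩
    rw [evalA_mul', evalA_of, ih (by omega) (by omega)]
    have heq := h1 ⟨n, by omega⟩ ⟨0, by omega⟩ (by simp only [Fin.val_mk]; omega)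
    rw [heq]
    exact congrArg b (Fin.ext (by simp only [Fin.val_mk]))

include hd h1 h2 h0 in
theorem Lform (t : ℕ) : Lspan F ({b ⟨0, aux_0 hd⟩} : Set A) t =
    Submodule.span F (⇑b '' {i | wtf d i ≤ t}) := by
  apply le_antisymm
  · refine Lspan_le (fun w hw hl => ?_)
    rcases classify b hd h1 h2 h0 w hw with ⟨k, hk, hkl, he⟩ | ⟨hda, he⟩ | ⟨h3a, he⟩
    · rw [he]
      refine Submodule.subset_span ⟨⟨k, by omega⟩, ?_, rfl⟩
      simp only [Set.mem_setOf_eq]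
      rw [wtf_of_ne _ (by simp only [Fin.val_mk]; omega)]
      simp only [Fin.val_mk]; omega
    · rw [he]; exact zero_mem _
    · rw [he]
      refine Submodule.subset_span ⟨⟨d - 1, by omega⟩, ?_, rfl⟩
      simp only [Set.mem_setOf_eq]
      rw [wtf_last (by omega)]; omega
  · refine Submodule.span_le.2 ?_
    rintro a ⟨i, hi, rfl⟩
    simp only [Set.mem_setOf_eq] at hi
    by_cases hie : (i : ℕ) = d - 1
    · have h3 : 2 * d - 3 ≤ t := by
        unfold wtf at hi; rw [if_pos hie] at hi; exact hi
      have hlv : HasLeavesIn ({b ⟨0, by omega⟩} : Set A)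
          (lpow (b ⟨0, by omega⟩) (d - 2) * lpow (b ⟨0, by omega⟩) (d - 3)) := by
        intro a' ha'
        rcases List.mem_append.1 (by simpa [leafList_mul] using ha') with h' | h'
        exacts [lpow_leaves _ _ a' h', lpow_leaves _ _ a' h']
      have hmem := mem_Lspan (F := F) (t := t) hlv
        (by rw [wlen_mul', lpow_wlen, lpow_wlen]; omega)
      have heval : evalA (lpow (b ⟨0, by omega⟩) (d - 2) * lpow (b ⟨0, by omega⟩) (d - 3))
          = b i := by
        rw [evalA_mul', lpow_eval b hd h1 (d - 2) le_rfl (by omega),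
          lpow_eval b hd h1 (d - 3) (by omega) (by omega)]
        exact h2.trans (congrArg b (Fin.ext (by simp only [Fin.val_mk]; omega)))
      rwa [heval] at hmem
    · have hle : (i : ℕ) ≤ d - 2 := by have := i.isLt; omega
      have hwt : wtf d i = (i : ℕ) + 1 := wtf_of_ne i hie
      have hmem := mem_Lspan (F := F) (t := t) (lpow_leaves (b ⟨0, by omega⟩) (i : ℕ))
        (by rw [lpow_wlen]; omega)
      rwa [lpow_eval b hd h1 (i : ℕ) hle i.isLt] at hmem

theorem repr_decomp (y : A) (h0d : 0 < d) (hd' : 4 ≤ d) :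
    y - b.repr y ⟨0, h0d⟩ • b ⟨0, h0d⟩ ∈ Wd b 2 := by
  classical
  have hy := b.sum_repr y
  have hsplit := Finset.add_sum_erase Finset.univ (fun i => b.repr y i • b i)
    (Finset.mem_univ (⟨0, h0d⟩ : Fin d))
  have heq : y - b.repr y ⟨0, h0d⟩ • b ⟨0, h0d⟩
      = ∑ i ∈ Finset.univ.erase ⟨0, h0d⟩, b.repr y i • b i := by
    nth_rewrite 1 [← hy]
    rw [← hsplit]
    abel
  rw [heq]
  refine Submodule.sum_mem _ (fun i hi => Submodule.smul_mem _ _ (Wd_memb b i 2 ?_))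
  have hne : i ≠ ⟨0, h0d⟩ := (Finset.mem_erase.1 hi).1
  have hv : (i : ℕ) ≠ 0 := fun hc => hne (Fin.ext hc)
  have := i.isLt
  unfold wtf; split <;> omega


include hd h1 h2 h0 in
theorem gen_top (S : Set A) (hS : Generates F S) : Lspan F S (2 * d - 3) = ⊤ := by
  classical
  have h0d : (0 : ℕ) < d := by omega
  have hd1 : d - 1 < d := by omega
  have hd2 : d - 2 < d := by omega
  have hd3 : d - 3 < d := by omega
  have hwt0 : wtf d ⟨0, h0d⟩ = 1 := by
    unfold wtf; rw [if_neg (by simp only [Fin.val_mk]; omega)]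
  -- Step 1: find x ∈ L₁(S) with 0-th coordinate 1.
  have hcoord : ∀ i j : Fin d, b i * b j ∈ LinearMap.ker (b.coord ⟨0, h0d⟩) := by
    intro i j
    rcases bb_weight b hd h1 h2 h0 i j with h | ⟨k, hk, hmk⟩
    · rw [h]; exact zero_mem _
    · rw [hk, LinearMap.mem_ker, Module.Basis.coord_apply, Module.Basis.repr_self]
      have h1k : 2 ≤ wtf d k := le_trans (by have := wtf_lb hd i; have := wtf_lb hd j; omega) hmk
      have hne : k ≠ ⟨0, h0d⟩ := by
        intro hc; rw [hc, hwt0] at h1k; omega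
      exact Finsupp.single_eq_of_ne hne.symm
  have hker : ∀ u v : A, u * v ∈ LinearMap.ker (b.coord ⟨0, h0d⟩) := by
    intro u v
    refine mul_span_span (s := Set.range ⇑b) (t := Set.range ⇑b) ?_ u ?_ v ?_
    · rintro x ⟨i, rfl⟩ y ⟨j, rfl⟩; exact hcoord i j
    · rw [b.span_eq]; exact Submodule.mem_top
    · rw [b.span_eq]; exact Submodule.mem_top
  have hexists : ∃ s ∈ S, b.coord ⟨0, h0d⟩ s ≠ 0 := by
    by_contra hcon
    push_neg at hcon
    have hle : Submodule.span F {a | ∃ w : FreeMagma A, HasLeavesIn S w ∧ evalA w = a}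
        ≤ LinearMap.ker (b.coord ⟨0, h0d⟩) := by
      refine Submodule.span_le.2 ?_
      rintro a ⟨w, hw, rfl⟩
      revert hw
      induction w with
      | ih1 s => intro hw; exact LinearMap.mem_ker.2 (hcon s (hw s (by simp [leafList])))
      | ih2 u v ihu ihv => intro _; exact hker (evalA u) (evalA v)
    rw [hS] at hle
    have hmem : b ⟨0, h0d⟩ ∈ LinearMap.ker (b.coord ⟨0, h0d⟩) := hle trivial
    rw [LinearMap.mem_ker, Module.Basis.coord_apply, Module.Basis.repr_self] at hmem
    simp at hmem
  obtain ⟨s, hsS, hcs⟩ := hexists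
  set x : A := (b.coord ⟨0, h0d⟩ s)⁻¹ • s with hxdef
  have hxL : x ∈ Lspan F S 1 := by
    refine Submodule.smul_mem _ _ ?_
    have hmem : evalA (FreeMagma.of s) ∈ Lspan F S 1 :=
      mem_Lspan (F := F) (fun a ha => by simp [leafList] at ha; rw [ha]; exact hsS)
        (by simp [wlen, leafList])
    exact hmem
  have hxc : b.repr x ⟨0, h0d⟩ = 1 := by
    have hne : b.repr s ⟨0, h0d⟩ ≠ 0 := by rwa [Module.Basis.coord_apply] at hcs
    rw [hxdef, map_smul, Finsupp.smul_apply, Module.Basis.coord_apply, smul_eq_mul]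
    exact inv_mul_cancel₀ hne
  have hx2 : x - b ⟨0, h0d⟩ ∈ Wd b 2 := by
    have hh := repr_decomp b x h0d hd
    rw [hxc, one_smul] at hh
    exact hh
  -- Step 2: the chain of left-normed powers of x.
  have chain : ∀ k : ℕ, k + 1 ≤ d - 1 → ∀ hkd : k < d,
      ∃ y ∈ Lspan F S (k + 1), y - b ⟨k, hkd⟩ ∈ Wd b (k + 2) := by
    intro k
    induction k with
    | zero => intro _ hkd; exact ⟨x, hxL, hx2⟩
    | succ k ih =>
      intro hk hkd
      obtain ⟨y, hyL, hyW⟩ := ih (by omega) (by omega)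
      refine ⟨y * x, mul_mem_Lspan hyL hxL, ?_⟩
      have hkd' : k < d := by omega
      have hbk : b ⟨k, hkd'⟩ * b ⟨0, h0d⟩ = b ⟨k + 1, hkd⟩ := by
        have heq := h1 ⟨k, hkd'⟩ ⟨0, h0d⟩ (by simp only [Fin.val_mk]; omega)
        rw [heq]
        exact congrArg b (Fin.ext (by simp only [Fin.val_mk]))
      have hyx : y * x - b ⟨k + 1, hkd⟩ =
          b ⟨k, hkd'⟩ * (x - b ⟨0, h0d⟩) + (y - b ⟨k, hkd'⟩) * b ⟨0, h0d⟩
            + (y - b ⟨k, hkd'⟩) * (x - b ⟨0, h0d⟩) := by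
        rw [← hbk]
        simp only [mul_sub, sub_mul]
        abel
      rw [hyx]
      have hwk : k + 1 ≤ wtf d ⟨k, hkd'⟩ := by
        rw [wtf_of_ne _ (by simp only [Fin.val_mk]; omega)]
      have m1 : b ⟨k, hkd'⟩ * (x - b ⟨0, h0d⟩) ∈ Wd b (k + 1 + 2) :=
        Wd_mul b hd h1 h2 h0 (Wd_memb b ⟨k, hkd'⟩ (k + 1) hwk) hx2
      have m2 : (y - b ⟨k, hkd'⟩) * b ⟨0, h0d⟩ ∈ Wd b (k + 1 + 2) := by
        have m2' := Wd_mul b hd h1 h2 h0 hyW (Wd_memb b ⟨0, h0d⟩ 1 (le_of_eq hwt0.symm))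
        rwa [show k + 2 + 1 = k + 1 + 2 from by omega] at m2'
      have m3 : (y - b ⟨k, hkd'⟩) * (x - b ⟨0, h0d⟩) ∈ Wd b (k + 1 + 2) :=
        Wd_anti b (by omega) (Wd_mul b hd h1 h2 h0 hyW hx2)
      exact add_mem (add_mem m1 m2) m3
  -- Step 3: the special product gives the last basis vector.
  obtain ⟨y1, hy1L, hy1W⟩ := chain (d - 2) (by omega) hd2
  obtain ⟨y2, hy2L, hy2W⟩ := chain (d - 3) (by omega) hd3
  rw [show d - 2 + 1 = d - 1 from by omega] at hy1L
  rw [show d - 2 + 2 = d from by omega] at hy1W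
  rw [show d - 3 + 1 = d - 2 from by omega] at hy2L
  rw [show d - 3 + 2 = d - 1 from by omega] at hy2W
  have hprod : y1 * y2 ∈ Lspan F S (2 * d - 3) := by
    have hh := mul_mem_Lspan hy1L hy2L
    rwa [show d - 1 + (d - 2) = 2 * d - 3 from by omega] at hh
  have h2' : b ⟨d - 2, hd2⟩ * b ⟨d - 3, hd3⟩ = b ⟨d - 1, hd1⟩ := h2
  have hexp : y1 * y2 - b ⟨d - 1, hd1⟩ =
      b ⟨d - 2, hd2⟩ * (y2 - b ⟨d - 3, hd3⟩) + (y1 - b ⟨d - 2, hd2⟩) * b ⟨d - 3, hd3⟩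
        + (y1 - b ⟨d - 2, hd2⟩) * (y2 - b ⟨d - 3, hd3⟩) := by
    rw [← h2']
    simp only [mul_sub, sub_mul]
    abel
  have hW : y1 * y2 - b ⟨d - 1, hd1⟩ ∈ Wd b (2 * d - 2) := by
    rw [hexp]
    have hw2 : d - 1 ≤ wtf d ⟨d - 2, hd2⟩ := by
      rw [wtf_of_ne _ (by simp only [Fin.val_mk]; omega)]
      simp only [Fin.val_mk]; omega
    have hw3 : d - 2 ≤ wtf d ⟨d - 3, hd3⟩ := by
      rw [wtf_of_ne _ (by simp only [Fin.val_mk]; omega)]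
      simp only [Fin.val_mk]; omega
    refine add_mem (add_mem ?_ ?_) ?_
    · exact Wd_anti b (by omega)
        (Wd_mul b hd h1 h2 h0 (Wd_memb b ⟨d - 2, hd2⟩ (d - 1) hw2) hy2W)
    · exact Wd_anti b (by omega)
        (Wd_mul b hd h1 h2 h0 hy1W (Wd_memb b ⟨d - 3, hd3⟩ (d - 2) hw3))
    · exact Wd_anti b (by omega) (Wd_mul b hd h1 h2 h0 hy1W hy2W)
  rw [Wd_bot b hd] at hW
  have hval : y1 * y2 = b ⟨d - 1, hd1⟩ :=
    sub_eq_zero.1 ((Submodule.mem_bot F).1 hW)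
  have hlast : b ⟨d - 1, hd1⟩ ∈ Lspan F S (2 * d - 3) := hval ▸ hprod
  -- Step 4: downward induction.
  have down : ∀ j : ℕ, j ≤ d - 1 → Wd b (d - j) ≤ Lspan F S (2 * d - 3) := by
    intro j
    induction j with
    | zero =>
      intro _
      refine Wd_le b (fun i hi => ?_)
      have hieq : i = ⟨d - 1, hd1⟩ := by
        apply Fin.ext
        simp only [Fin.val_mk]
        by_cases h : (i : ℕ) = d - 1
        · exact h
        · exfalso; rw [wtf_of_ne i h] at hi; have := i.isLt; omega
      rw [hieq]; exact hlast
    | succ n ih =>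
      intro hnd
      have hWn := ih (by omega)
      refine Wd_le b (fun i hi => ?_)
      by_cases hit : wtf d i = d - (n + 1)
      · obtain ⟨y, hyL, hyW⟩ := chain (d - (n + 1) - 1) (by omega) (by omega)
        have hiv : (i : ℕ) = d - (n + 1) - 1 := wtf_inj hd i _ (by omega) hit
        have hbi : b i = y - (y - b ⟨d - (n + 1) - 1, by omega⟩) := by
          rw [sub_sub_cancel]
          exact congrArg b (Fin.ext (by simp only [Fin.val_mk]; omega))
        rw [hbi]
        refine sub_mem (Lspan_mono' (by omega) hyL) (hWn ?_)
        have harith : d - n = d - (n + 1) - 1 + 2 := by omega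
        rw [harith]
        exact hyW
      · exact hWn (Wd_memb b i _ (by omega))
  have hfin : Wd b 1 ≤ Lspan F S (2 * d - 3) := by
    have hh := down (d - 1) le_rfl
    rwa [show d - (d - 1) = 1 from by omega] at hh
  rw [Wd_top b hd] at hfin
  exact top_le_iff.1 hfin

end WithMul
end MyAux


section Statement
variable {F A : Type*} [Field F] [NonUnitalNonAssocRing A] [Module F A]
  [SMulCommClass F A A] [IsScalarTower F A A]

/- STATEMENT 12 -/
theorem stmt12 (d : ℕ) (hd : 4 ≤ d)
    (b : Module.Basis (Fin d) F A)
    (h1 : ∀ i j : Fin d, (hij : (i : ℕ) + (j : ℕ) + 3 ≤ d) →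
      b i * b j = b ⟨(i : ℕ) + (j : ℕ) + 1, by omega⟩)
    (h2 : b ⟨d - 2, by omega⟩ * b ⟨d - 3, by omega⟩ = b ⟨d - 1, by omega⟩)
    (h0 : ∀ i j : Fin d, ¬((i : ℕ) + (j : ℕ) + 3 ≤ d) →
      ¬((i : ℕ) = d - 2 ∧ (j : ℕ) = d - 3) → b i * b j = 0) :
    Generates F {b ⟨0, by omega⟩} ∧
      IsCharSeq F {b ⟨0, by omega⟩}
        (fun j : Fin d => if (j : ℕ) = d - 1 then 2 * d - 3 else (j : ℕ) + 1) ∧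
      lenS F {b ⟨0, by omega⟩} = 2 * d - 3 ∧
      (∀ S : Set A, S.Finite → Generates F S → lenS F S ≤ 2 * d - 3) := by
  classical
  have h0d : (0 : ℕ) < d := by omega
  have hd1 : d - 1 < d := by omega
  -- L-span computation for the singleton generating set
  have hLtop : Lspan F ({b ⟨0, h0d⟩} : Set A) (2 * d - 3) = ⊤ := by
    rw [Lform b hd h1 h2 h0 (2 * d - 3)]
    have hu : {i : Fin d | wtf d i ≤ 2 * d - 3} = Set.univ := by
      ext i; simp [wtf_ub hd i]
    rw [hu, Set.image_univ, b.span_eq]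
  have hgen : Generates F ({b ⟨0, h0d⟩} : Set A) := by
    apply eq_top_iff.2
    rw [← hLtop]
    exact Submodule.span_mono (fun a ⟨w, hw, hl, he⟩ => ⟨w, hw, he⟩)
  have hnot : ∀ k : ℕ, k < 2 * d - 3 → Lspan F ({b ⟨0, h0d⟩} : Set A) k ≠ ⊤ := by
    intro k hk hcon
    have hmem : b ⟨d - 1, hd1⟩ ∈ Lspan F ({b ⟨0, h0d⟩} : Set A) k :=
      hcon ▸ Submodule.mem_top
    rw [Lform b hd h1 h2 h0 k] at hmem
    have hnm : b ⟨d - 1, hd1⟩ ∉ Submodule.span F (⇑b '' {i | wtf d i ≤ k}) := by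
      apply b.linearIndependent.notMem_span_image
      simp only [Set.mem_setOf_eq, wtf_last hd1]
      omega
    exact hnm hmem
  have hlen : lenS F ({b ⟨0, h0d⟩} : Set A) = 2 * d - 3 := by
    show sInf {k | Lspan F ({b ⟨0, h0d⟩} : Set A) k = ⊤} = 2 * d - 3
    apply le_antisymm
    · exact Nat.sInf_le hLtop
    · refine le_csInf ⟨2 * d - 3, hLtop⟩ (fun k hk => ?_)
      by_contra hlt
      push_neg at hlt
      exact hnot k (by omega) hk
  have hrank : ∀ u : ℕ, Module.finrank F (Lspan F ({b ⟨0, h0d⟩} : Set A) u)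
      = (Finset.univ.filter fun i : Fin d => wtf d i ≤ u).card := by
    intro u
    rw [Lform b hd h1 h2 h0 u]
    have hset : ({i : Fin d | wtf d i ≤ u} : Set (Fin d))
        = ↑(Finset.univ.filter fun i : Fin d => wtf d i ≤ u) := by
      ext i; simp
    rw [hset, finrank_span_image]
  have hchar : IsCharSeq F ({b ⟨0, h0d⟩} : Set A)
      (fun j : Fin d => if (j : ℕ) = d - 1 then 2 * d - 3 else (j : ℕ) + 1) := by
    refine ⟨?_, ?_, ?_⟩
    · intro i j hij
      have hv : (i : ℕ) ≤ (j : ℕ) := hij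
      have hj := j.isLt
      dsimp only
      split_ifs <;> omega
    · intro j
      dsimp only
      split_ifs <;> omega
    · intro t ht
      have hsd : (Finset.univ.filter fun j : Fin d => wtf d j = t)
          = (Finset.univ.filter fun i : Fin d => wtf d i ≤ t)
            \ (Finset.univ.filter fun i : Fin d => wtf d i ≤ t - 1) := by
        ext j
        simp only [Finset.mem_filter, Finset.mem_sdiff, Finset.mem_univ, true_and]
        omega
      have hsub : (Finset.univ.filter fun i : Fin d => wtf d i ≤ t - 1)
          ⊆ (Finset.univ.filter fun i : Fin d => wtf d i ≤ t) := by
        intro j hj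
        simp only [Finset.mem_filter, Finset.mem_univ, true_and] at hj ⊢
        omega
      have hcard : (Finset.univ.filter fun j : Fin d => wtf d j = t).card
          = (Finset.univ.filter fun i : Fin d => wtf d i ≤ t).card
            - (Finset.univ.filter fun i : Fin d => wtf d i ≤ t - 1).card := by
        rw [hsd, Finset.card_sdiff_of_subset hsub]
      show (Finset.univ.filter fun j : Fin d => wtf d j = t).card
          = Module.finrank F (Lspan F ({b ⟨0, h0d⟩} : Set A) t)
            - Module.finrank F (Lspan F ({b ⟨0, h0d⟩} : Set A) (t - 1))
      rw [hcard, hrank t, hrank (t - 1)]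
  exact ⟨hgen, hchar, hlen, fun S _ hS => Nat.sInf_le (gen_top b hd h1 h2 h0 S hS)⟩

end Statement

end P
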